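/- Let L be the Schrödinger-Virasoro algebra. There exist Lie bialgebra structures (L, [·,·], Δ) on L that are not triangular coboundary; specifically, taking Δ = D with D a nonzero element of the family D(L_n) = γ(M_0⊗M_n − M_n⊗M_0), D(Y_{n−1/2}) = β(M_0⊗Y_{n−1/2} − Y_{n−1/2}⊗M_0), D(M_n) = 2β(M_0⊗M_n − M_n⊗M_0) yields a Lie bialgebra whose cobracket Δ is not of the form Δ_r(x) = x·r for any r ∈ L⊗L. -/

import Mathlib

open TensorProduct

/-- Index set for the basis of the Schrödinger–Virasoro algebra:
`Sum.inl n ↔ L_n`, `Sum.inr (Sum.inl n) ↔ Y_{n+1/2}`, `Sum.inr (Sum.inr n) ↔ M_n`. -/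
abbrev SVIx : Type := ℤ ⊕ ℤ ⊕ ℤ

variable (F : Type) [Field F] [CharZero F]

/-- Underlying space of the Schrödinger–Virasoro algebra: the free `F`-module on `SVIx`. -/
abbrev SVL := SVIx →₀ F

noncomputable def Lb (n : ℤ) : SVL F := Finsupp.single (Sum.inl n) 1
noncomputable def Yb (n : ℤ) : SVL F := Finsupp.single (Sum.inr (Sum.inl n)) 1
noncomputable def Mb (n : ℤ) : SVL F := Finsupp.single (Sum.inr (Sum.inr n)) 1

/-- The bracket of basis vectors.  Here `Yb n` stands for `Y_{n+1/2}`, so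
`[L_m, Y_{n+1/2}] = ((n+1/2) - m/2) Y_{m+n+1/2}` and
`[Y_{a+1/2}, Y_{b+1/2}] = (b-a) M_{a+b+1}`; all other brackets vanish. -/
noncomputable def brIx : SVIx → SVIx → SVL F
  | Sum.inl m, Sum.inl n => ((n - m : ℤ) : F) • Lb F (m + n)
  | Sum.inl m, Sum.inr (Sum.inl n) => (((2*n + 1 - m : ℤ) : F) / 2) • Yb F (m + n)
  | Sum.inl m, Sum.inr (Sum.inr n) => ((n : ℤ) : F) • Mb F (m + n)
  | Sum.inr (Sum.inl n), Sum.inl m => -((((2*n + 1 - m : ℤ) : F) / 2) • Yb F (m + n))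
  | Sum.inr (Sum.inl a), Sum.inr (Sum.inl b) => ((b - a : ℤ) : F) • Mb F (a + b + 1)
  | Sum.inr (Sum.inr n), Sum.inl m => -(((n : ℤ) : F) • Mb F (m + n))
  | _, _ => 0

/-- The bracket of the Schrödinger–Virasoro algebra: the bilinear extension of `brIx`. -/
noncomputable def bk : SVL F →ₗ[F] SVL F →ₗ[F] SVL F :=
  Finsupp.lsum F fun i => LinearMap.toSpanSingleton F (SVL F →ₗ[F] SVL F)
    (Finsupp.lsum F fun j => LinearMap.toSpanSingleton F (SVL F) (brIx F i j))

abbrev VV := SVL F ⊗[F] SVL F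

noncomputable instance : AddCommGroup (VV F) := inferInstance

noncomputable instance : Zero (VV F) :=
  (inferInstance : AddCommMonoid (VV F)).toAddMonoid.toZero

/-- The adjoint diagonal action of `L` on `L ⊗ L`, as a bilinear map:
`x · (a ⊗ b) = [x,a] ⊗ b + a ⊗ [x,b]`. -/
noncomputable def adVb : SVL F →ₗ[F] VV F →ₗ[F] VV F :=
  ((LinearMap.rTensorHom (SVL F) : (SVL F →ₗ[F] SVL F) →ₗ[F] (VV F →ₗ[F] VV F)) ∘ₗ bk F)
    + ((LinearMap.lTensorHom (SVL F) : (SVL F →ₗ[F] SVL F) →ₗ[F] (VV F →ₗ[F] VV F)) ∘ₗ bk F)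

/-- The twist map `τ(x ⊗ y) = y ⊗ x`. -/
noncomputable def tau : VV F →ₗ[F] VV F := (TensorProduct.comm F (SVL F) (SVL F)).toLinearMap

/-- The map `1 - τ`. -/
noncomputable def oneMinusTau : VV F →ₗ[F] VV F where
  toFun v := v - tau F v
  map_add' x y := by
    simp only [map_add]; exact sub_add_sub_comm x (tau F x) y (tau F y) ▸ rfl
  map_smul' c x := by simp only [map_smul, RingHom.id_apply, smul_sub]

/-- `Im (1 - τ) ⊂ L ⊗ L`. -/
noncomputable def skewIm : Submodule F (VV F) := LinearMap.range (oneMinusTau F)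
abbrev T3 := SVL F ⊗[F] (SVL F ⊗[F] SVL F)

/-- The bracket as a linear map on `L ⊗ L`. -/
noncomputable def lb : VV F →ₗ[F] SVL F := TensorProduct.lift (bk F)

/-- The linear map with `(a ⊗ b) ⊗ (a' ⊗ b') ↦ [a,a'] ⊗ b ⊗ b' + a ⊗ [b,a'] ⊗ b' + a ⊗ a' ⊗ [b,b']`,
so that the classical Yang–Baxter expression is `c(r) = cmap (r ⊗ r)`. -/
noncomputable def cmap : (VV F ⊗[F] VV F) →ₗ[F] T3 F :=
  ((TensorProduct.map (lb F) (LinearMap.id : VV F →ₗ[F] VV F)) ∘ₗ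
      (TensorProduct.tensorTensorTensorComm F (SVL F) (SVL F) (SVL F) (SVL F)).toLinearMap)
  + ((LinearMap.lTensor (SVL F)
        ((TensorProduct.map (lb F) (LinearMap.id : SVL F →ₗ[F] SVL F)) ∘ₗ
          (TensorProduct.assoc F (SVL F) (SVL F) (SVL F)).symm.toLinearMap)) ∘ₗ
      (TensorProduct.assoc F (SVL F) (SVL F) (VV F)).toLinearMap)
  + (((TensorProduct.assoc F (SVL F) (SVL F) (SVL F)).toLinearMap) ∘ₗ
      (TensorProduct.map (LinearMap.id : VV F →ₗ[F] VV F) (lb F)) ∘ₗ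
      (TensorProduct.tensorTensorTensorComm F (SVL F) (SVL F) (SVL F) (SVL F)).toLinearMap)

/-- The classical Yang–Baxter expression `c(r)`. -/
noncomputable def cyb (r : VV F) : T3 F := cmap F (r ⊗ₜ[F] r)

/-- The adjoint diagonal action of `x ∈ L` on `L ⊗ L ⊗ L`. -/
noncomputable def adT3 (x : SVL F) : T3 F →ₗ[F] T3 F :=
  LinearMap.rTensor (VV F) (bk F x) + LinearMap.lTensor (SVL F) (adVb F x)

/-- The cyclic map `ξ : x₁ ⊗ x₂ ⊗ x₃ ↦ x₂ ⊗ x₃ ⊗ x₁`. -/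
noncomputable def xi : T3 F →ₗ[F] T3 F :=
  (TensorProduct.assoc F (SVL F) (SVL F) (SVL F)).toLinearMap ∘ₗ
    (TensorProduct.comm F (SVL F) (VV F)).toLinearMap

/-- `1 + ξ + ξ²` applied to an element of `L ⊗ L ⊗ L`. -/
noncomputable def cyclicSum (t : T3 F) : T3 F := t + xi F t + xi F (xi F t)

noncomputable instance : Zero (T3 F) :=
  (inferInstance : AddCommMonoid (T3 F)).toAddMonoid.toZero

/-- Values on basis elements of the special derivations `D` with parameters
`(α, α†, β, β†, γ, γ†)`:  `D(L_n) = (nα+γ) M₀⊗M_n + (nα†+γ†) M_n⊗M₀`,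
`D(Y_{n+1/2}) = β M₀⊗Y_{n+1/2} + β† Y_{n+1/2}⊗M₀`, `D(M_n) = 2(β M₀⊗M_n + β† M_n⊗M₀)`. -/
noncomputable def dval (a a' b b' c c' : F) : SVIx → VV F
  | Sum.inl n => (((n : ℤ) : F) * a + c) • (Mb F 0 ⊗ₜ[F] Mb F n)
      + (((n : ℤ) : F) * a' + c') • (Mb F n ⊗ₜ[F] Mb F 0)
  | Sum.inr (Sum.inl n) => b • (Mb F 0 ⊗ₜ[F] Yb F n) + b' • (Yb F n ⊗ₜ[F] Mb F 0)
  | Sum.inr (Sum.inr n) => (2 * b) • (Mb F 0 ⊗ₜ[F] Mb F n) + (2 * b') • (Mb F n ⊗ₜ[F] Mb F 0)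

/-- The special derivation with parameters `(α, α†, β, β†, γ, γ†)`. -/
noncomputable def Dmap (a a' b b' c c' : F) : SVL F →ₗ[F] VV F :=
  Finsupp.lsum F fun i => LinearMap.toSpanSingleton F (VV F) (dval F a a' b b' c c' i)

/-- `D` is a derivation from `L` to the `L`-module `L ⊗ L`. -/
def IsDer (D : SVL F →ₗ[F] VV F) : Prop :=
  ∀ x y : SVL F, D (bk F x y) = adVb F x (D y) - adVb F y (D x)


set_option linter.unusedSectionVars false
set_option linter.unusedTactic false
set_option maxHeartbeats 1000000
section Aux
variable (F : Type) [Field F] [CharZero F]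

lemma bk_single (i j : SVIx) (s t : F) :
    bk F (Finsupp.single i s) (Finsupp.single j t) = (s * t) • brIx F i j := by
  simp [bk, LinearMap.toSpanSingleton_apply, mul_smul, Finsupp.lsum_single]

lemma Dmap_single (a a' b b' c c' : F) (i : SVIx) (t : F) :
    Dmap F a a' b b' c c' (Finsupp.single i t) = t • dval F a a' b b' c c' i := by
  simp [Dmap, LinearMap.toSpanSingleton_apply, Finsupp.lsum_single]

lemma adVb_tmul (x u v : SVL F) :
    adVb F x (u ⊗ₜ[F] v) = (bk F x u) ⊗ₜ[F] v + u ⊗ₜ[F] (bk F x v) := by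
  simp [adVb, LinearMap.rTensorHom, LinearMap.lTensorHom]

lemma isDer_special (b c : F) : IsDer F (Dmap F 0 0 b (-b) c (-c)) := by
  have key : ((bk F).compr₂ (Dmap F 0 0 b (-b) c (-c)))
      = (adVb F).compl₂ (Dmap F 0 0 b (-b) c (-c))
        - ((adVb F).compl₂ (Dmap F 0 0 b (-b) c (-c))).flip := by
    ext i j
    simp only [LinearMap.comp_apply, Finsupp.lsingle_apply, LinearMap.compr₂_apply,
      LinearMap.compl₂_apply, LinearMap.sub_apply, LinearMap.flip_apply]
    rcases i with m | m | m <;> rcases j with n | n | n <;>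
      simp only [brIx, dval, Lb, Yb, Mb, Dmap_single, adVb_tmul, bk_single, map_smul,
        map_add, map_sub, smul_smul, tmul_smul, ← smul_tmul', smul_add, smul_sub, map_neg,
        map_zero, smul_zero, zero_smul, one_mul, mul_one, neg_smul, tmul_zero, zero_tmul,
        add_comm] <;>
      match_scalars <;> push_cast <;> ring
  intro x y
  simpa using LinearMap.congr_fun (LinearMap.congr_fun key x) y

lemma dval_skew (b c : F) (i : SVIx) : dval F 0 0 b (-b) c (-c) i ∈ skewIm F := by
  rcases i with n | n | n
  · exact ⟨c • (Mb F 0 ⊗ₜ[F] Mb F n), by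
      simp [oneMinusTau, dval, tau, smul_tmul', tmul_smul]; module⟩
  · exact ⟨b • (Mb F 0 ⊗ₜ[F] Yb F n), by
      simp [oneMinusTau, dval, tau, smul_tmul', tmul_smul]; module⟩
  · exact ⟨(2*b) • (Mb F 0 ⊗ₜ[F] Mb F n), by
      simp [oneMinusTau, dval, tau, smul_tmul', tmul_smul]; module⟩

lemma part1 (b c : F) : ∀ x : SVL F, Dmap F 0 0 b (-b) c (-c) x ∈ skewIm F := by
  intro x
  induction x using Finsupp.induction_linear with
  | zero => simp only [map_zero]; exact Submodule.zero_mem _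
  | add f g hf hg => simp only [map_add]; exact Submodule.add_mem _ hf hg
  | single a t =>
      rw [Dmap_single]
      exact Submodule.smul_mem _ _ (dval_skew F b c a)

lemma cyclicSum_add (s t : T3 F) : cyclicSum F (s + t) = cyclicSum F s + cyclicSum F t := by
  simp only [cyclicSum, map_add]; abel

lemma cyclicSum_smul (a : F) (t : T3 F) : cyclicSum F (a • t) = a • cyclicSum F t := by
  simp only [cyclicSum, map_smul, smul_add]

lemma xi_tmul (x y z : SVL F) : xi F (x ⊗ₜ[F] (y ⊗ₜ[F] z)) = y ⊗ₜ[F] (z ⊗ₜ[F] x) := by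
  simp [xi]

lemma D_Mb (a a' b b' c c' : F) (n : ℤ) :
    Dmap F a a' b b' c c' (Mb F n)
      = (2 * b) • (Mb F 0 ⊗ₜ[F] Mb F n) + (2 * b') • (Mb F n ⊗ₜ[F] Mb F 0) := by
  rw [Mb, Dmap_single, one_smul]
  rfl

lemma D_Yb (a a' b b' c c' : F) (n : ℤ) :
    Dmap F a a' b b' c c' (Yb F n)
      = b • (Mb F 0 ⊗ₜ[F] Yb F n) + b' • (Yb F n ⊗ₜ[F] Mb F 0) := by
  rw [Yb, Dmap_single, one_smul]
  rfl

lemma part2 (b c : F) : ∀ x : SVL F,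
    cyclicSum F (LinearMap.lTensor (SVL F) (Dmap F 0 0 b (-b) c (-c))
      (Dmap F 0 0 b (-b) c (-c) x)) = 0 := by
  intro x
  induction x using Finsupp.induction_linear with
  | zero => simp [cyclicSum]
  | add f g hf hg => rw [map_add, map_add, cyclicSum_add, hf, hg, add_zero]
  | single a t =>
      rw [Dmap_single, map_smul, cyclicSum_smul]
      rcases a with n | n | n <;>
        simp only [dval, map_add, map_smul, LinearMap.lTensor_tmul, D_Mb, D_Yb,
          tmul_add, tmul_smul, cyclicSum_add, cyclicSum_smul, cyclicSum, xi_tmul,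
          map_zero, smul_zero, add_zero, zero_add] <;>
        module
noncomputable def lam (p q : SVIx) : VV F →ₗ[F] F :=
  (Finsupp.lapply (p,q)) ∘ₗ (finsuppTensorFinsupp' F SVIx SVIx).toLinearMap

lemma lam_tmul (p q i j : SVIx) (s t : F) :
    lam F p q (Finsupp.single i s ⊗ₜ[F] Finsupp.single j t)
      = if (i, j) = (p, q) then s * t else 0 := by
  classical
  simp only [lam, LinearMap.comp_apply, LinearEquiv.coe_toLinearMap,
    finsuppTensorFinsupp'_single_tmul_single, Finsupp.lapply_apply, Finsupp.single_apply]

lemma keyM (n : ℤ) :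
    (lam F (Sum.inr (Sum.inr 0)) (Sum.inr (Sum.inr n))).comp (adVb F (Mb F n))
      = ((-n : ℤ) : F) • (lam F (Sum.inl (-n)) (Sum.inr (Sum.inr n))
          + lam F (Sum.inr (Sum.inr 0)) (Sum.inl 0)) := by
  ext i j
  simp only [TensorProduct.AlgebraTensorModule.curry_apply, TensorProduct.curry_apply,
    LinearMap.coe_restrictScalars, LinearMap.comp_apply, Finsupp.lsingle_apply,
    LinearMap.smul_apply, LinearMap.add_apply, smul_eq_mul]
  rcases i with m | m | m <;> rcases j with k | k | k <;>
    simp only [Mb, Yb, Lb, adVb_tmul, bk_single, brIx, one_mul, mul_one, map_add, map_smul,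
      map_neg, map_zero, zero_smul, smul_zero, neg_smul, ← smul_tmul', tmul_smul,
      tmul_neg, neg_tmul, zero_tmul, tmul_zero, lam_tmul, smul_eq_mul,
      Prod.mk.injEq, Sum.inl.injEq, Sum.inr.injEq, add_zero, zero_add, mul_zero] <;>
    split_ifs <;> push_cast <;> simp_all <;> omega
lemma keyL (n : ℤ) :
    (lam F (Sum.inr (Sum.inr 0)) (Sum.inr (Sum.inr n))).comp (adVb F (Lb F n))
      = ((-n : ℤ) : F) • lam F (Sum.inr (Sum.inr (-n))) (Sum.inr (Sum.inr n)) := by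
  ext i j
  simp only [TensorProduct.AlgebraTensorModule.curry_apply, TensorProduct.curry_apply,
    LinearMap.coe_restrictScalars, LinearMap.comp_apply, Finsupp.lsingle_apply,
    LinearMap.smul_apply, smul_eq_mul]
  rcases i with m | m | m <;> rcases j with k | k | k <;>
    simp only [Mb, Yb, Lb, adVb_tmul, bk_single, brIx, one_mul, mul_one, map_add, map_smul,
      map_neg, map_zero, zero_smul, smul_zero, neg_smul, ← smul_tmul', tmul_smul,
      tmul_neg, neg_tmul, zero_tmul, tmul_zero, lam_tmul, smul_eq_mul,
      Prod.mk.injEq, Sum.inl.injEq, Sum.inr.injEq, add_zero, zero_add, mul_zero] <;>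
    split_ifs <;> push_cast <;> simp_all <;> omega

lemma lamD_L (b c : F) (n : ℤ) (hn : n ≠ 0) :
    lam F (Sum.inr (Sum.inr 0)) (Sum.inr (Sum.inr n)) (Dmap F 0 0 b (-b) c (-c) (Lb F n))
      = c := by
  rw [Lb, Dmap_single, one_smul]
  simp [dval, Mb, lam_tmul, hn, Prod.ext_iff]

lemma lamD_M (b c : F) (n : ℤ) (hn : n ≠ 0) :
    lam F (Sum.inr (Sum.inr 0)) (Sum.inr (Sum.inr n)) (Dmap F 0 0 b (-b) c (-c) (Mb F n))
      = 2 * b := by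
  rw [Mb, Dmap_single, one_smul]
  simp [dval, Mb, lam_tmul, hn, Prod.ext_iff]

end Aux

/-- There exist Lie bialgebra structures on the Schrödinger–Virasoro algebra which are
not (triangular) coboundary: for `(β, γ) ≠ (0,0)`, the derivation
`D = Dmap 0 0 β (-β) γ (-γ)` is the cobracket of a Lie bialgebra but is not of the
form `Δ_r(x) = x · r` for any `r ∈ L ⊗ L`. -/
theorem sv_exists_noncoboundary_lieBialgebra :
    ∀ b c : F, ¬(b = 0 ∧ c = 0) →
      ((∀ x : SVL F, Dmap F 0 0 b (-b) c (-c) x ∈ skewIm F) ∧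
       (∀ x : SVL F, cyclicSum F (LinearMap.lTensor (SVL F) (Dmap F 0 0 b (-b) c (-c))
          (Dmap F 0 0 b (-b) c (-c) x)) = 0) ∧
       IsDer F (Dmap F 0 0 b (-b) c (-c))) ∧
      ¬∃ r : VV F, ∀ x : SVL F, Dmap F 0 0 b (-b) c (-c) x = adVb F x r := by
  intro b c hbc
  refine ⟨⟨part1 F b c, part2 F b c, isDer_special F b c⟩, ?_⟩
  rintro ⟨r, h⟩
  classical
  set K : Finset ℤ := ((finsuppTensorFinsupp' F SVIx SVIx r).support).image
    (fun p => match p.2 with | .inr (.inr k) => k | _ => 0) with hK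
  set M : ℕ := K.sup (fun k => k.toNat) with hM
  have good : ∀ n : ℤ, (M : ℤ) < n → ∀ p : SVIx,
      lam F p (Sum.inr (Sum.inr n)) r = 0 := by
    intro n hn p
    by_contra hne
    have hmem : (p, (Sum.inr (Sum.inr n) : SVIx))
        ∈ (finsuppTensorFinsupp' F SVIx SVIx r).support := by
      rw [Finsupp.mem_support_iff]
      exact hne
    have : n ∈ K := by
      rw [hK]
      exact Finset.mem_image.mpr ⟨_, hmem, rfl⟩
    have h1 : n.toNat ≤ M := Finset.le_sup (f := fun k => k.toNat) this
    omega
  set N : ℤ := (M : ℤ) with hN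
  have hNn : ∀ m : ℤ, 0 < m → (M : ℤ) < N + m := fun m hm => by omega
  have hc : c = 0 := by
    have h1 : lam F (Sum.inr (Sum.inr 0)) (Sum.inr (Sum.inr (N+1)))
        (Dmap F 0 0 b (-b) c (-c) (Lb F (N+1))) = c := by
      refine lamD_L F b c (N+1) (by omega)
    rw [h (Lb F (N+1))] at h1
    have h2 := LinearMap.congr_fun (keyL F (N+1)) r
    simp only [LinearMap.comp_apply, LinearMap.smul_apply, smul_eq_mul] at h2
    rw [h2, good (N+1) (hNn 1 one_pos) _, mul_zero] at h1
    exact h1.symm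
  have key2b : ∀ m : ℤ, 0 < m →
      2 * b = ((-(N+m) : ℤ) : F) * lam F (Sum.inr (Sum.inr 0)) (Sum.inl 0) r := by
    intro m hm
    have h1 : lam F (Sum.inr (Sum.inr 0)) (Sum.inr (Sum.inr (N+m)))
        (Dmap F 0 0 b (-b) c (-c) (Mb F (N+m))) = 2 * b := by
      refine lamD_M F b c (N+m) (by omega)
    rw [h (Mb F (N+m))] at h1
    have h2 := LinearMap.congr_fun (keyM F (N+m)) r
    simp only [LinearMap.comp_apply, LinearMap.smul_apply, LinearMap.add_apply,
      smul_eq_mul] at h2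
    rw [h2, good (N+m) (hNn m hm) _, zero_add] at h1
    exact h1.symm
  have hb : b = 0 := by
    have e1 := key2b 1 one_pos
    have e2 := key2b 2 two_pos
    set K0 := lam F (Sum.inr (Sum.inr 0)) (Sum.inl 0) r with hK0
    have hK00 : K0 = 0 := by
      have : ((-(N+1) : ℤ) : F) * K0 = ((-(N+2) : ℤ) : F) * K0 := by rw [← e1, ← e2]
      have hdiff : (((-(N+1) : ℤ) : F) - ((-(N+2) : ℤ) : F)) * K0 = 0 := by
        rw [sub_mul, this, sub_self]
      have hne : (((-(N+1) : ℤ) : F) - ((-(N+2) : ℤ) : F)) ≠ 0 := by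
        push_cast
        ring_nf
        exact one_ne_zero
      exact (mul_eq_zero.mp hdiff).resolve_left hne
    rw [hK00, mul_zero] at e1
    exact (mul_eq_zero.mp e1).resolve_left two_ne_zero
  exact hbc ⟨hb, hc⟩
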